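/- Fix α > 0 and an integer k ≥ 1, and define h_k(x) = ∑_{j=0}^{k} (-1)^j (k choose j) (x - j)_+^α for x ∈ ℝ, where y_+ = max{y, 0}. Then there exists a constant K > 0 such that |h_k(x)| ≤ K (x - k)^{α - k} for all x > k + 1. -/

import Mathlib

open Finset

lemma aux_mvt : ∀ (n : ℕ) (c : ℝ) (x : ℝ), (n : ℝ) < x →
    ∃ ξ : ℝ, x - n ≤ ξ ∧ ξ ≤ x ∧
      ∑ j ∈ range (n + 1), (-1 : ℝ) ^ j * (n.choose j : ℝ) * (x - (j : ℝ)) ^ c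
        = (∏ i ∈ range n, (c - (i : ℝ))) * ξ ^ (c - (n : ℝ)) := by
  intro n
  induction n with
  | zero =>
    intro c x hx
    exact ⟨x, by simp, le_refl x, by simp⟩
  | succ n ih =>
    intro c x hx
    have hx' : (n : ℝ) < x - 1 := by push_cast at hx ⊢; linarith
    set g : ℝ → ℝ := fun t => ∑ j ∈ range (n + 1), (-1 : ℝ) ^ j * (n.choose j : ℝ) * (t - (j : ℝ)) ^ c with hg
    have hderiv : ∀ t : ℝ, (n : ℝ) < t →
        HasDerivAt g (∑ j ∈ range (n + 1), (-1 : ℝ) ^ j * (n.choose j : ℝ) * (c * (t - (j : ℝ)) ^ (c - 1))) t := by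
      intro t ht
      apply HasDerivAt.fun_sum
      intro j hj
      have hjt : t - (j : ℝ) ≠ 0 := by
        have : (j : ℝ) ≤ (n : ℝ) := by
          exact_mod_cast Nat.lt_succ_iff.mp (mem_range.mp hj)
        have : 0 < t - j := by linarith
        linarith
      have h1 : HasDerivAt (fun t : ℝ => (t - (j : ℝ)) ^ c) (c * (t - (j : ℝ)) ^ (c - 1)) t := by
        have := (Real.hasDerivAt_rpow_const (p := c) (Or.inl hjt)).comp t
          ((hasDerivAt_id t).sub_const (j : ℝ))
        simpa [Function.comp_def] using this
      simpa using h1.const_mul ((-1 : ℝ) ^ j * (n.choose j : ℝ))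
    have h1x : x - 1 < x := by linarith
    obtain ⟨η, hη, hηeq⟩ := exists_hasDerivAt_eq_slope g
      (fun t => ∑ j ∈ range (n + 1), (-1 : ℝ) ^ j * (n.choose j : ℝ) * (c * (t - (j : ℝ)) ^ (c - 1)))
      h1x
      (fun t ht => (hderiv t (by rcases ht with ⟨h1, h2⟩; linarith)).continuousAt.continuousWithinAt)
      (fun t ht => hderiv t (by rcases ht with ⟨h1, h2⟩; linarith))
    have hηn : (n : ℝ) < η := by rcases hη with ⟨h1, h2⟩; linarith
    obtain ⟨ξ, hξ1, hξ2, hξeq⟩ := ih (c - 1) η hηn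
    refine ⟨ξ, ?_, ?_, ?_⟩
    · rcases hη with ⟨h1, h2⟩; push_cast; push_cast at hξ1; linarith
    · rcases hη with ⟨h1, h2⟩; linarith
    -- Pascal: the (n+1)-difference equals g x - g (x-1)
    have hgx1 : g (x - 1) = ∑ j ∈ range (n + 1), (-1 : ℝ) ^ j * (n.choose j : ℝ) * (x - ((j : ℝ) + 1)) ^ c := by
      simp only [hg]
      refine Finset.sum_congr rfl fun j hj => ?_
      ring_nf
    have pascal : ∑ j ∈ range (n + 1 + 1), (-1 : ℝ) ^ j * ((n+1).choose j : ℝ) * (x - (j : ℝ)) ^ c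
        = g x - g (x - 1) := by
      rw [Finset.sum_range_succ']
      have expand : ∑ j ∈ range (n + 1), (-1 : ℝ) ^ (j+1) * (((n+1).choose (j+1) : ℕ) : ℝ) * (x - ((j+1 : ℕ):ℝ)) ^ c
          = ∑ j ∈ range (n + 1), ((-1 : ℝ) ^ (j+1) * (n.choose j : ℝ) * (x - ((j:ℝ)+1)) ^ c
              + (-1 : ℝ) ^ (j+1) * (n.choose (j+1) : ℝ) * (x - ((j:ℝ)+1)) ^ c) := by
        refine Finset.sum_congr rfl fun j hj => ?_
        rw [Nat.choose_succ_succ']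
        push_cast
        ring
      rw [expand, Finset.sum_add_distrib]
      have hA : ∑ j ∈ range (n + 1), (-1 : ℝ) ^ (j+1) * (n.choose j : ℝ) * (x - ((j:ℝ)+1)) ^ c
          = -g (x - 1) := by
        rw [hgx1, ← Finset.sum_neg_distrib]
        refine Finset.sum_congr rfl fun j hj => ?_
        ring
      have hB : ∑ j ∈ range (n + 1), (-1 : ℝ) ^ (j+1) * (n.choose (j+1) : ℝ) * (x - ((j:ℝ)+1)) ^ c
          = g x - x ^ c := by
        rw [Finset.sum_range_succ]
        simp only [Nat.choose_succ_self, Nat.cast_zero, mul_zero, zero_mul, add_zero]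
        simp only [hg]
        rw [Finset.sum_range_succ' (fun j => (-1 : ℝ) ^ j * (n.choose j : ℝ) * (x - (j : ℝ)) ^ c) n]
        simp only [Nat.choose_zero_right, Nat.cast_one, pow_zero, Nat.cast_zero, one_mul, mul_one,
          sub_zero, add_sub_cancel_right]
        refine Finset.sum_congr rfl fun j hj => ?_
        push_cast
        ring
      rw [hA, hB]
      simp only [Nat.choose_zero_right, Nat.cast_one, pow_zero, Nat.cast_zero, one_mul, mul_one, sub_zero]
      ring
    rw [pascal]
    have hone : x - (x - 1) = 1 := by ring
    rw [hone, div_one] at hηeq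
    rw [← hηeq]
    have : ∑ j ∈ range (n + 1), (-1 : ℝ) ^ j * (n.choose j : ℝ) * (c * (η - (j : ℝ)) ^ (c - 1))
        = c * ∑ j ∈ range (n + 1), (-1 : ℝ) ^ j * (n.choose j : ℝ) * (η - (j : ℝ)) ^ (c - 1) := by
      rw [Finset.mul_sum]; refine Finset.sum_congr rfl fun j hj => by ring
    have hpr : (∏ i ∈ range (n + 1), (c - (i : ℝ))) = c * ∏ i ∈ range n, (c - 1 - (i : ℝ)) := by
      rw [Finset.prod_range_succ' (fun i => c - (i : ℝ)) n]
      simp only [Nat.cast_zero, sub_zero]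
      rw [mul_comm]
      congr 1
      exact Finset.prod_congr rfl fun i _ => by push_cast; ring
    rw [this, hξeq, hpr]
    rw [show c - ((n + 1 : ℕ) : ℝ) = c - 1 - (n : ℝ) from by push_cast; ring]
    ring

/-- For `α > 0` and an integer `k ≥ 1`, with
`h_k(x) = ∑_{j=0}^{k} (-1)^j (k choose j) (x - j)_+^α`, there is a constant `K > 0`
such that `|h_k(x)| ≤ K (x - k)^(α - k)` for all `x > k + 1`. -/
theorem stmt_1 (α : ℝ) (hα : 0 < α) (k : ℕ) (hk : 1 ≤ k) :
    ∃ K : ℝ, 0 < K ∧ ∀ x : ℝ, (k : ℝ) + 1 < x →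
      |∑ j ∈ Finset.range (k + 1),
          (-1 : ℝ) ^ j * (k.choose j : ℝ) * (max (x - (j : ℝ)) 0) ^ α|
        ≤ K * (x - (k : ℝ)) ^ (α - (k : ℝ)) := by
  set D := |∏ i ∈ Finset.range k, (α - (i : ℝ))| with hD
  have hDnn : 0 ≤ D := abs_nonneg _
  set B := ((k : ℝ) + 1) ^ (α - (k : ℝ)) with hB
  have hBpos : 0 < B := Real.rpow_pos_of_pos (by positivity) _
  refine ⟨(D + 1) * (1 + B), by nlinarith, ?_⟩
  intro x hx
  have hk1 : (1 : ℝ) ≤ (k : ℝ) := by exact_mod_cast hk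
  have hsum : ∑ j ∈ Finset.range (k + 1),
      (-1 : ℝ) ^ j * (k.choose j : ℝ) * (max (x - (j : ℝ)) 0) ^ α
      = ∑ j ∈ Finset.range (k + 1), (-1 : ℝ) ^ j * (k.choose j : ℝ) * (x - (j : ℝ)) ^ α := by
    refine Finset.sum_congr rfl fun j hj => ?_
    have hjk : (j : ℝ) ≤ (k : ℝ) := by
      exact_mod_cast Nat.lt_succ_iff.mp (Finset.mem_range.mp hj)
    rw [max_eq_left (by linarith)]
  rw [hsum]
  obtain ⟨ξ, hξ1, hξ2, heq⟩ := aux_mvt k α x (by linarith)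
  rw [heq, abs_mul]
  have hxk : (0 : ℝ) < x - k := by linarith
  have hξpos : 0 < ξ := lt_of_lt_of_le hxk hξ1
  rw [abs_of_nonneg (Real.rpow_nonneg hξpos.le _), ← hD]
  have hrnn : 0 ≤ (x - (k : ℝ)) ^ (α - (k : ℝ)) := Real.rpow_nonneg hxk.le _
  rcases le_or_gt α (k : ℝ) with hcase | hcase
  · have h1 : ξ ^ (α - (k : ℝ)) ≤ (x - (k : ℝ)) ^ (α - (k : ℝ)) :=
      Real.rpow_le_rpow_of_nonpos hxk hξ1 (by linarith)
    have h2 : D * ξ ^ (α - (k : ℝ)) ≤ D * (x - (k : ℝ)) ^ (α - (k : ℝ)) :=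
      mul_le_mul_of_nonneg_left h1 hDnn
    nlinarith [mul_nonneg hDnn hrnn, mul_nonneg hBpos.le hrnn,
      mul_nonneg (mul_nonneg hDnn hBpos.le) hrnn]
  · have hxb : x ≤ ((k : ℝ) + 1) * (x - k) := by nlinarith
    have h1 : ξ ^ (α - (k : ℝ)) ≤ (((k : ℝ) + 1) * (x - k)) ^ (α - (k : ℝ)) :=
      Real.rpow_le_rpow hξpos.le (le_trans hξ2 hxb) (by linarith)
    rw [Real.mul_rpow (by positivity) hxk.le] at h1
    have h2 : D * ξ ^ (α - (k : ℝ)) ≤ D * (B * (x - (k : ℝ)) ^ (α - (k : ℝ))) :=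
      mul_le_mul_of_nonneg_left h1 hDnn
    nlinarith [mul_nonneg hDnn hrnn, mul_nonneg hBpos.le hrnn,
      mul_nonneg (mul_nonneg hDnn hBpos.le) hrnn]
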